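/- Let κ, κ̃ > 0 and real numbers ρ, ρ̃, ρ_i, ρ̃_i (i = 1,…,n, not all ρ_i, ρ̃_i zero) satisfying: κρ̃ = κ̃ρ, (κ̃−4)ρ − ρρ̃ + 12 − 2κ = 0, (κ−4)ρ̃ − ρρ̃ + 12 − 2κ̃ = 0, ρρ̃_i = 2ρ_i, and ρ̃ρ_i = 2ρ̃_i for all i. Then ρρ̃ = 4, and either (κ = κ̃, ρ = ρ̃ = 2, ρ_i = ρ̃_i for all i) or (κκ̃ = 16, ρ = −κ/2, ρ̃ = −κ̃/2, ρ̃_i = −(4/κ)ρ_i for all i). -/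
import Mathlib


/-- Classification of commuting SLE_κ(ρ,ρ₁,…,ρ_n) pairs in the parametric case. -/
theorem commutation_parametric_classification (n : ℕ) (κ κt ρ ρt : ℝ)
    (ρi ρti : Fin n → ℝ)
    (hκ : 0 < κ) (hκt : 0 < κt)
    (hnz : ∃ i, ρi i ≠ 0 ∨ ρti i ≠ 0)
    (h1 : κ * ρt = κt * ρ)
    (h2 : (κt - 4) * ρ - ρ * ρt + 12 - 2 * κ = 0)
    (h3 : (κ - 4) * ρt - ρ * ρt + 12 - 2 * κt = 0)
    (h4 : ∀ i, ρ * ρti i = 2 * ρi i)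
    (h5 : ∀ i, ρt * ρi i = 2 * ρti i) :
    ρ * ρt = 4 ∧
    ((κ = κt ∧ ρ = 2 ∧ ρt = 2 ∧ ∀ i, ρi i = ρti i) ∨
     (κ * κt = 16 ∧ ρ = -κ / 2 ∧ ρt = -κt / 2 ∧ ∀ i, ρti i = -(4 / κ) * ρi i)) := by
  have hκ0 : κ ≠ 0 := ne_of_gt hκ
  have hκt0 : κt ≠ 0 := ne_of_gt hκt
  obtain ⟨i, hi⟩ := hnz
  have hρρt : ρ * ρt = 4 := by
    rcases hi with h | h
    · have key : (ρ * ρt) * ρi i = 4 * ρi i := by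
        linear_combination ρ * h5 i + 2 * h4 i
      exact mul_right_cancel₀ h key
    · have key : (ρ * ρt) * ρti i = 4 * ρti i := by
        linear_combination ρt * h4 i + 2 * h5 i
      exact mul_right_cancel₀ h key
  refine ⟨hρρt, ?_⟩
  have hA : (κt - 4) * ρ = 2 * (κ - 4) := by linear_combination h2 + hρρt
  have hB : (κ - 4) * ρt = 2 * (κt - 4) := by linear_combination h3 + hρρt
  have hC : κt * ρ ^ 2 = 4 * κ := by linear_combination (-ρ) * h1 + κ * hρρt
  have hD : (κ - κt) * (κ * κt - 16) = 0 := by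
    linear_combination (-(κt / 4) * (2 * (κ - 4) + (κt - 4) * ρ)) * hA
      + ((κt - 4) ^ 2 / 4) * hC
  rcases mul_eq_zero.mp hD with hE | hE
  · -- κ = κt
    have hκκt : κ = κt := by linarith
    subst hκκt
    have hρρ : ρt = ρ := mul_left_cancel₀ hκ0 h1
    subst hρρ
    have hsq : (ρt - 2) * (ρt + 2) = 0 := by linear_combination hρρt
    rcases mul_eq_zero.mp hsq with h | h
    · have hρ2 : ρt = 2 := by linarith
      left
      refine ⟨rfl, hρ2, hρ2, fun j => ?_⟩
      have := h4 j; rw [hρ2] at this; linarith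
    · have hρ2 : ρt = -2 := by linarith
      have hκ4 : κ = 4 := by rw [hρ2] at hA; linarith
      right
      refine ⟨by rw [hκ4]; norm_num, by rw [hρ2, hκ4]; norm_num,
        by rw [hρ2, hκ4]; norm_num, fun j => ?_⟩
      have := h5 j; rw [hρ2] at this
      rw [hκ4]; norm_num; linarith
  · have hκκt : κ * κt = 16 := by linarith
    have hsq : (2 * ρ - κ) * (2 * ρ + κ) = 0 := by
      have hz : κt * ((2 * ρ - κ) * (2 * ρ + κ)) = 0 := by
        linear_combination 4 * hC - κ * hκκt
      exact (mul_eq_zero.mp hz).resolve_left hκt0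
    rcases mul_eq_zero.mp hsq with h | h
    · have hρ : ρ = κ / 2 := by linarith
      have hκ4 : κ = 4 := by
        linear_combination (-1 / 4) * hA + ((κt - 4) / 4) * hρ + (1 / 8) * hκκt
      have hκt4 : κt = 4 := by rw [hκ4] at hκκt; linarith
      have hρ2 : ρ = 2 := by rw [hκ4] at hρ; linarith
      have hρt2 : ρt = 2 := by rw [hρ2] at hρρt; linarith
      left
      refine ⟨by rw [hκ4, hκt4], hρ2, hρt2, fun j => ?_⟩
      have := h4 j; rw [hρ2] at this; linarith
    · have hρ : ρ = -κ / 2 := by linarith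
      have hρtz : κ * (ρt + κt / 2) = 0 := by
        linear_combination (-2) * hρρt + (1 / 2) * hκκt + (2 * ρt) * hρ
      have hρt : ρt = -κt / 2 := by
        have := (mul_eq_zero.mp hρtz).resolve_left hκ0; linarith
      right
      refine ⟨hκκt, hρ, hρt, fun j => ?_⟩
      have hj : κ * ρti j = -4 * ρi j := by
        linear_combination (-κ / 2) * (h5 j) + (κ * ρi j / 2) * hρt
          + (-(ρi j) / 4) * hκκt
      field_simp
      linarith
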